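/- Let ε, ε_safe ∈ ℝ with ε_safe ≤ ε, let ρ > 0, K a positive integer, and ℓ : ℕ → [0,1] a loss sequence. Define γ by γ_{t+1} = γ_t + ρ(ε − ℓ_t). Suppose that for any window of K consecutive indices k ∈ [t, t+K−1], the average loss (1/K) Σ_{k=t}^{t+K−1} ℓ_k ≤ ε_safe whenever γ_k ≤ γ_safe for all k in the window (the eventual-safety condition). If γ_1 ≥ γ_safe − ρ, then γ_t ≥ γ_safe − Kρ for all t ≥ 1. -/

import Mathlib

/-- Key lemma for the conformal controller theorem: under the eventual-safety
condition with tolerance `ε_safe ≤ ε` and `γ 1 ≥ γ_safe − ρ`, the control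
variable stays bounded below by `γ_safe − K ρ`. -/
theorem stmt_4 (ε εsafe γsafe ρ : ℝ) (hεs : εsafe ≤ ε) (hρ : 0 < ρ)
    (K : ℕ) (hK : 0 < K) (ℓ γ : ℕ → ℝ)
    (hℓ : ∀ t, ℓ t ∈ Set.Icc (0 : ℝ) 1)
    (hupd : ∀ t, γ (t + 1) = γ t + ρ * (ε - ℓ t))
    (hsafe : ∀ t : ℕ, 1 ≤ t →
      (∀ k ∈ Finset.Icc t (t + K - 1), γ k ≤ γsafe) →
      (1 / (K : ℝ)) * ∑ k ∈ Finset.Icc t (t + K - 1), ℓ k ≤ εsafe)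
    (hinit : γsafe - ρ ≤ γ 1) :
    ∀ t : ℕ, 1 ≤ t → γsafe - (K : ℝ) * ρ ≤ γ t := by
  have hKR : (0:ℝ) < K := by exact_mod_cast hK
  -- telescoping identity
  have tele : ∀ t n : ℕ, γ (t + n) = γ t + ρ * ∑ i ∈ Finset.range n, (ε - ℓ (t + i)) := by
    intro t n
    induction n with
    | zero => simp
    | succ n ih =>
      rw [Finset.sum_range_succ, show t + (n+1) = (t+n)+1 from rfl, hupd, ih]
      ring
  -- ε is nonnegative, else contradiction with safety
  have hε : 0 ≤ ε := by
    by_contra h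
    push_neg at h
    have dec : ∀ t n : ℕ, γ (t + n) ≤ γ t + n * (ρ * ε) := by
      intro t n
      rw [tele t n]
      have hs : ∑ i ∈ Finset.range n, (ε - ℓ (t + i)) ≤ n * ε := by
        calc ∑ i ∈ Finset.range n, (ε - ℓ (t+i)) ≤ ∑ _i ∈ Finset.range n, ε := by
              apply Finset.sum_le_sum; intro i _
              have := (hℓ (t+i)).1; linarith
          _ = n * ε := by simp [mul_comm]
      nlinarith
    obtain ⟨n, hn⟩ := exists_nat_ge ((γ 1 - γsafe) / (ρ * (-ε)))
    have hρε : 0 < ρ * (-ε) := mul_pos hρ (by linarith)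
    have h4 : γ 1 - γsafe ≤ n * (ρ * (-ε)) := by
      rw [div_le_iff₀ hρε] at hn; linarith
    have key : ∀ k, 1 + n ≤ k → γ k ≤ γsafe := by
      intro k hk
      have h1 : γ k ≤ γ 1 + ((k - 1 : ℕ):ℝ) * (ρ * ε) := by
        have := dec 1 (k - 1)
        rwa [show 1 + (k-1) = k from by omega] at this
      have h2 : (n:ℝ) ≤ ((k-1:ℕ):ℝ) := by exact_mod_cast (by omega : n ≤ k - 1)
      have h3 : ((k-1:ℕ):ℝ) * (ρ * ε) ≤ n * (ρ * ε) := by nlinarith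
      nlinarith
    have hh := hsafe (1+n) (by omega) (fun k hk => key k (Finset.mem_Icc.mp hk).1)
    have hsum : 0 ≤ ∑ k ∈ Finset.Icc (1+n) (1+n + K - 1), ℓ k :=
      Finset.sum_nonneg (fun k _ => (hℓ k).1)
    have h1K : 0 < 1 / (K:ℝ) := by positivity
    nlinarith
  -- per-step drop bound
  have stepdown : ∀ t, γ t - ρ ≤ γ (t+1) := by
    intro t
    have := hupd t
    have := (hℓ t).2
    nlinarith
  have chain : ∀ t n : ℕ, γ t - n * ρ ≤ γ (t + n) := by
    intro t n
    induction n with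
    | zero => simp
    | succ n ih =>
      have := stepdown (t + n)
      push_cast
      rw [show t + (n+1) = (t+n)+1 from rfl]
      linarith
  intro t
  induction t using Nat.strong_induction_on with
  | _ t IH =>
    intro ht
    by_cases htK : t ≤ K
    · -- early times: just the drop bound from γ 1
      have h1 := chain 1 (t - 1)
      rw [show 1 + (t-1) = t from by omega] at h1
      have hc : ((t-1:ℕ):ℝ) ≤ (K:ℝ) - 1 := by
        have : ((t-1:ℕ):ℝ) = (t:ℝ) - 1 := by
          have : (1:ℝ) ≤ (t:ℝ) := by exact_mod_cast ht
          push_cast [Nat.cast_sub ht]; ring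
        rw [this]
        have : (t:ℝ) ≤ (K:ℝ) := by exact_mod_cast htK
        linarith
      nlinarith
    · push_neg at htK  -- K < t
      by_contra hcon
      push_neg at hcon
      -- trace back: γ (t - j) < γsafe - Kρ + jρ for j ≤ K
      have trace : ∀ j, j ≤ K → γ (t - j) < γsafe - (K:ℝ)*ρ + j*ρ := by
        intro j
        induction j with
        | zero => intro _; simpa using hcon
        | succ j ihj =>
          intro hj
          have hjK : j ≤ K := by omega
          have h1 := ihj hjK
          have h2 := stepdown (t - (j+1))
          rw [show t - (j+1) + 1 = t - j from by omega] at h2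
          push_cast
          linarith
      -- the window [t-K, t-1] has γ ≤ γsafe everywhere
      have hwin : ∀ k ∈ Finset.Icc (t-K) (t-K + K - 1), γ k ≤ γsafe := by
        intro k hk
        rw [Finset.mem_Icc] at hk
        have hk1 : t - K ≤ k := hk.1
        have hk2 : k ≤ t - 1 := by omega
        set j := t - k with hj
        have hjle : j ≤ K := by omega
        have := trace j hjle
        rw [show t - j = k from by omega] at this
        have hjR : (j:ℝ) ≤ (K:ℝ) := by exact_mod_cast hjle
        nlinarith
      have hs := hsafe (t-K) (by omega) hwin
      -- rewrite the Icc sum as a range sum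
      have hIcc : ∑ k ∈ Finset.Icc (t-K) (t-K + K - 1), ℓ k
          = ∑ i ∈ Finset.range K, ℓ (t-K + i) := by
        refine Finset.sum_nbij' (fun k => k - (t-K)) (fun i => t-K+i) ?_ ?_ ?_ ?_ ?_
        · intro a ha
          rw [Finset.mem_Icc] at ha
          rw [Finset.mem_range]; omega
        · intro a ha
          rw [Finset.mem_range] at ha
          rw [Finset.mem_Icc]; omega
        · intro a ha
          rw [Finset.mem_Icc] at ha
          omega
        · intro a ha
          rw [Finset.mem_range] at ha
          omega
        · intro a ha
          rw [Finset.mem_Icc] at ha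
          rw [show t - K + (a - (t-K)) = a from by omega]
      rw [hIcc] at hs
      -- total loss over window ≤ K ε
      have hsum : ∑ i ∈ Finset.range K, ℓ (t-K + i) ≤ (K:ℝ) * ε := by
        rw [div_mul_eq_mul_div, div_le_iff₀ hKR, one_mul] at hs
        calc ∑ i ∈ Finset.range K, ℓ (t-K + i) ≤ εsafe * K := hs
          _ ≤ (K:ℝ) * ε := by nlinarith
      have htel := tele (t-K) K
      rw [show t - K + K = t from by omega] at htel
      have hse : ∑ i ∈ Finset.range K, (ε - ℓ (t-K + i))
          = (K:ℝ) * ε - ∑ i ∈ Finset.range K, ℓ (t-K + i) := by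
        rw [Finset.sum_sub_distrib]
        simp [mul_comm]
      have hIH := IH (t-K) (by omega) (by omega)
      nlinarith [hρ]
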